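/- (Non-negativity of the deficit integral I_p(u), Theorem 3.1(i), first part) Let N ≥ 2, p > 1, let Ω ⊆ ℝ^N be open, and let u : Ω → ℝ be of class C². Define f : Ω → ℝ by f(x) := |∇u(x)|^{p−2} ‖( I + (p−2) (∇u(x)/|∇u(x)|) ⊗ (∇u(x)/|∇u(x)|) ) D²u(x)‖² − (Δ_p u(x))² / ( N |∇u(x)|^{p−2} ) if ∇u(x) ≠ 0, and f(x) := 0 if ∇u(x) = 0. Then f(x) ≥ 0 for every x ∈ Ω, and consequently the integral I_p(u) := ∫_Ω f(x) dx (with respect to Lebesgue measure) satisfies I_p(u) ≥ 0. -/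

import Mathlib

open Matrix Real MeasureTheory

/-- The Hessian matrix of `u` at `x`: entry `(i,j)` is `∂²u/∂xᵢ∂xⱼ`. -/
noncomputable def hess {N : ℕ} (u : EuclideanSpace ℝ (Fin N) → ℝ) (x : EuclideanSpace ℝ (Fin N)) :
    Matrix (Fin N) (Fin N) ℝ :=
  fun i j => gradient (fun y => gradient u y j) x i

/-- The divergence of a vector field: the trace of its Fréchet derivative. -/
noncomputable def diverg {N : ℕ} (W : EuclideanSpace ℝ (Fin N) → EuclideanSpace ℝ (Fin N))
    (x : EuclideanSpace ℝ (Fin N)) : ℝ :=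
  ∑ i, fderiv ℝ W x (EuclideanSpace.single i 1) i

/-- The `p`-Laplacian `Δ_p u = div(|∇u|^{p-2} ∇u)`. -/
noncomputable def pLap {N : ℕ} (p : ℝ) (u : EuclideanSpace ℝ (Fin N) → ℝ)
    (x : EuclideanSpace ℝ (Fin N)) : ℝ :=
  diverg (fun y => ‖gradient u y‖ ^ (p - 2) • gradient u y) x

/-- The square of the Frobenius norm of a matrix. -/
noncomputable def frobSq {n : ℕ} (A : Matrix (Fin n) (Fin n) ℝ) : ℝ :=
  ∑ i, ∑ j, (A i j)^2

section Aux

open InnerProductSpace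

local notation "E" N => EuclideanSpace ℝ (Fin N)

variable {N : ℕ}

lemma grad_coord (h : (E N) → ℝ) (x : E N) (L : (E N) →L[ℝ] ℝ) (hL : HasFDerivAt h L x)
    (i : Fin N) : gradient h x i = L (EuclideanSpace.single i 1) := by
  have h1 : gradient h x = (toDual ℝ (E N)).symm L := hL.hasGradientAt.gradient
  have h2 : gradient h x i = inner ℝ (gradient h x) (EuclideanSpace.single i (1:ℝ)) := by
    rw [EuclideanSpace.inner_single_right]; simp
  rw [h2, h1, toDual_symm_apply]

lemma hess_eq (u : (E N) → ℝ) (x : E N) (H' : (E N) →L[ℝ] (E N))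
    (hG' : HasFDerivAt (gradient u) H' x) (i j : Fin N) :
    hess u x i j = H' (EuclideanSpace.single i 1) j := by
  have hc : HasFDerivAt ((EuclideanSpace.proj j : (E N) →L[ℝ] ℝ) ∘ gradient u)
      ((EuclideanSpace.proj j).comp H') x :=
    (EuclideanSpace.proj j).hasFDerivAt.comp x hG'
  have := grad_coord ((EuclideanSpace.proj j : (E N) →L[ℝ] ℝ) ∘ gradient u) x _ hc i
  simpa [hess, Function.comp_def] using this

lemma grad_contDiffAt (u : (E N) → ℝ) (x : E N) (hx : ContDiffAt ℝ 2 u x) :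
    ContDiffAt ℝ 1 (gradient u) x := by
  have h1 : ContDiffAt ℝ 1 (fderiv ℝ u) x := hx.fderiv_right (by norm_num)
  have h2 : gradient u = ((toDual ℝ (E N)).symm ∘ fderiv ℝ u) := by
    funext y; rfl
  rw [h2]
  exact ((toDual ℝ (E N)).symm.contDiff.contDiffAt).comp x h1

lemma pLap_raw (p : ℝ) (u : (E N) → ℝ) (x : E N) (hx : ContDiffAt ℝ 2 u x)
    (hg : gradient u x ≠ 0) :
    pLap p u x = ‖gradient u x‖^(p-2) * (∑ i, hess u x i i)
      + (p-2) * ‖gradient u x‖^(p-4) *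
        ∑ i, (∑ k, gradient u x k * hess u x i k) * gradient u x i := by
  have hdiff : DifferentiableAt ℝ (gradient u) x :=
    (grad_contDiffAt u x hx).differentiableAt one_ne_zero
  set g := gradient u x with hgdef
  set H' := fderiv ℝ (gradient u) x with hH'
  have hG' : HasFDerivAt (gradient u) H' x := hdiff.hasFDerivAt
  have hnorm : (0:ℝ) < ‖g‖ := norm_pos_iff.2 hg
  set q := (p-2)/2 with hq
  have hinner : HasFDerivAt (fun y => (inner ℝ (gradient u y) (gradient u y) : ℝ))
      ((fderivInnerCLM ℝ (g, g)).comp (H'.prod H')) x := hG'.inner ℝ hG'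
  have hself : (inner ℝ g g : ℝ) = ‖g‖^2 := real_inner_self_eq_norm_sq g
  have hne : (inner ℝ g g : ℝ) ≠ 0 := by rw [hself]; positivity
  have hr : HasDerivAt (fun z : ℝ => z ^ q) (q * (inner ℝ g g : ℝ) ^ (q-1)) (inner ℝ g g : ℝ) :=
    Real.hasDerivAt_rpow_const (Or.inl hne)
  have hs : HasFDerivAt (fun y => (inner ℝ (gradient u y) (gradient u y) : ℝ) ^ q)
      ((q * (inner ℝ g g : ℝ)^(q-1)) • ((fderivInnerCLM ℝ (g, g)).comp (H'.prod H'))) x :=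
    by have := hr.comp_hasFDerivAt x hinner; exact this
  have hW : HasFDerivAt (fun y => ((inner ℝ (gradient u y) (gradient u y):ℝ)^q) • gradient u y)
      ((((inner ℝ g g : ℝ)^q) • H') + (((q * (inner ℝ g g:ℝ)^(q-1)) •
        ((fderivInnerCLM ℝ (g,g)).comp (H'.prod H'))).smulRight g)) x := hs.smul hG'
  have hfun : (fun y => ‖gradient u y‖^(p-2) • gradient u y)
      = fun y => ((inner ℝ (gradient u y) (gradient u y):ℝ)^q) • gradient u y := by
    funext y
    rw [real_inner_self_eq_norm_sq, ← Real.rpow_natCast ‖gradient u y‖ 2,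
      ← Real.rpow_mul (norm_nonneg _)]
    congr 1
    rw [hq]; ring
  rw [pLap, diverg, hfun, hW.fderiv]
  have hhess : ∀ i j, H' (EuclideanSpace.single i 1) j = hess u x i j :=
    fun i j => (hess_eq u x H' hG' i j).symm
  have hpow1 : ((inner ℝ g g : ℝ))^q = ‖g‖^(p-2) := by
    rw [hself, ← Real.rpow_natCast ‖g‖ 2, ← Real.rpow_mul (norm_nonneg _)]
    congr 1; rw [hq]; ring
  have hpow2 : ((inner ℝ g g : ℝ))^(q-1) = ‖g‖^(p-4) := by
    rw [hself, ← Real.rpow_natCast ‖g‖ 2, ← Real.rpow_mul (norm_nonneg _)]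
    congr 1; rw [hq]; ring
  simp only [ContinuousLinearMap.add_apply, ContinuousLinearMap.coe_smul', Pi.smul_apply,
    ContinuousLinearMap.smulRight_apply, ContinuousLinearMap.coe_comp', Function.comp_apply,
    ContinuousLinearMap.prod_apply, fderivInnerCLM_apply, PiLp.add_apply, PiLp.smul_apply,
    smul_eq_mul, hhess, hpow1, hpow2]
  simp only [PiLp.inner_apply, RCLike.inner_apply, conj_trivial, hhess]
  rw [Finset.mul_sum, Finset.mul_sum, ← Finset.sum_add_distrib]
  refine Finset.sum_congr rfl fun i _ => ?_
  have hcomm : (∑ k, hess u x i k * g k) = ∑ k, g k * hess u x i k :=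
    Finset.sum_congr rfl fun k _ => mul_comm _ _
  rw [hcomm]
  ring

end Aux

/-- **Non-negativity of the deficit integral `I_p(u)`** (Theorem 3.1(i), first part, of the
paper). Let `f` be the integrand of `I_p(u)`, i.e.
`f(x) = |∇u|^{p-2} ‖(I + (p-2)(∇u/|∇u|)⊗(∇u/|∇u|)) D²u‖² - (Δ_p u)²/(N |∇u|^{p-2})` at
non-critical points and `f(x) = 0` at critical points. Then `f ≥ 0` on `Ω` and hence
`I_p(u) = ∫_Ω f ≥ 0`. -/
theorem deficit_integral_nonneg (N : ℕ) (hN : 2 ≤ N) (p : ℝ) (hp : 1 < p)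
    (Ω : Set (EuclideanSpace ℝ (Fin N))) (hΩ : IsOpen Ω)
    (u : EuclideanSpace ℝ (Fin N) → ℝ) (hu : ContDiffOn ℝ 2 u Ω)
    (f : EuclideanSpace ℝ (Fin N) → ℝ)
    (hf0 : ∀ x, gradient u x = 0 → f x = 0)
    (hf1 : ∀ x, gradient u x ≠ 0 → f x =
      ‖gradient u x‖ ^ (p - 2) *
          frobSq (((1 : Matrix (Fin N) (Fin N) ℝ) +
              (p - 2) • Matrix.vecMulVec (fun i => gradient u x i / ‖gradient u x‖)
                (fun i => gradient u x i / ‖gradient u x‖)) * hess u x) -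
        (pLap p u x) ^ 2 / ((N : ℝ) * ‖gradient u x‖ ^ (p - 2))) :
    (∀ x ∈ Ω, 0 ≤ f x) ∧ 0 ≤ ∫ x in Ω, f x := by
  have key : ∀ x ∈ Ω, 0 ≤ f x := by
    intro x hx
    by_cases hg : gradient u x = 0
    · rw [hf0 x hg]
    · rw [hf1 x hg]
      have hu2 : ContDiffAt ℝ 2 u x := hu.contDiffAt (hΩ.mem_nhds hx)
      set g := gradient u x with hgdef
      have hnorm : (0:ℝ) < ‖g‖ := norm_pos_iff.2 hg
      set r := ‖g‖^(p-2) with hr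
      have hrpos : (0:ℝ) < r := Real.rpow_pos_of_pos hnorm _
      set A := ((1 : Matrix (Fin N) (Fin N) ℝ) +
          (p - 2) • Matrix.vecMulVec (fun i => g i / ‖g‖) (fun i => g i / ‖g‖)) * hess u x
        with hA
      set t := ∑ i, A i i with ht
      have hNpos : (0:ℝ) < (N:ℝ) := by
        have : 0 < N := lt_of_lt_of_le (by norm_num) hN
        exact_mod_cast this
      have hrpos : (0:ℝ) < ‖g‖^(p-2) := Real.rpow_pos_of_pos hnorm _
      have hsplit : t = (∑ i, hess u x i i)
          + (p-2) / ‖g‖^2 * ∑ i, ∑ k, g i * g k * hess u x k i := by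
        rw [ht, hA]
        simp only [Matrix.mul_apply, Matrix.add_apply, Matrix.one_apply, Matrix.smul_apply,
          Matrix.vecMulVec_apply, smul_eq_mul, add_mul, ite_mul, one_mul, zero_mul,
          Finset.sum_add_distrib, Finset.sum_ite_eq, Finset.mem_univ, if_true]
        congr 1
        rw [Finset.mul_sum]
        refine Finset.sum_congr rfl fun i _ => ?_
        rw [Finset.mul_sum]
        refine Finset.sum_congr rfl fun k _ => ?_
        field_simp
      have hswap : (∑ i, ∑ k, g i * g k * hess u x k i)
          = ∑ i, (∑ k, g k * hess u x i k) * g i := by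
        rw [Finset.sum_comm]
        refine Finset.sum_congr rfl fun i _ => ?_
        rw [Finset.sum_mul]
        refine Finset.sum_congr rfl fun k _ => ?_
        ring
      have hkey : ‖g‖^(p-2) = ‖g‖^(p-4) * ‖g‖^2 := by
        rw [← Real.rpow_natCast ‖g‖ 2, ← Real.rpow_add hnorm]
        congr 1
        ring
      have key2 : pLap p u x = ‖g‖^(p-2) * t := by
        rw [pLap_raw p u x hu2 hg, hsplit, hswap, hkey]
        have h2 : (‖g‖:ℝ) ≠ 0 := ne_of_gt hnorm
        field_simp
        ring
      rw [key2]
      have hsq : t^2 ≤ (N:ℝ) * frobSq A := by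
        calc t^2 ≤ (N:ℝ) * ∑ i, (A i i)^2 := by
              simpa using sq_sum_le_card_mul_sum_sq (s := Finset.univ) (f := fun i => A i i)
          _ ≤ (N:ℝ) * frobSq A := by
              refine mul_le_mul_of_nonneg_left ?_ hNpos.le
              refine Finset.sum_le_sum fun i _ => ?_
              exact Finset.single_le_sum (f := fun j => (A i j)^2)
                (fun j _ => sq_nonneg _) (Finset.mem_univ i)
      have hF : t^2/(N:ℝ) ≤ frobSq A := by
        rw [div_le_iff₀ hNpos]
        linarith [hsq]
      have heq : (‖g‖^(p-2) * t)^2 / ((N:ℝ) * ‖g‖^(p-2)) = ‖g‖^(p-2) * (t^2/(N:ℝ)) := by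
        have hrne : (‖g‖:ℝ)^(p-2) ≠ 0 := ne_of_gt hrpos
        field_simp
      rw [heq]
      have hm := mul_le_mul_of_nonneg_left hF hrpos.le
      linarith
  refine ⟨key, setIntegral_nonneg hΩ.measurableSet key⟩
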